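/- (Theorem 3, tightest bound B_1.) For every t > 0 and every λ > 0, (1/n) log ℙ(S_n ≥ n t) ≤ B(λ; c_*, v̄, K, K_1) − λ t; consequently (1/n) log ℙ(S_n ≥ n t) ≤ inf_{λ > 0} { B(λ; c_*, v̄, K, K_1) − λ t }. -/

import Mathlib

open MeasureTheory ProbabilityTheory Real Finset

/-- `f k u = ∑_{j=0}^∞ u^j / (j+k)!`. -/
noncomputable def fSeries (k : ℕ) (u : ℝ) : ℝ := ∑' j : ℕ, u ^ j / (Nat.factorial (j + k) : ℝ)

/-- `B(λ; c✶, v̄, K, K₁) = (1/2) λ² v̄ + λ² K (f₂(λ c✶) − 1/2) − λ⁴ c✶² K₁ f₄(λ c✶)`. -/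
noncomputable def Bbound (l cstar v K K1 : ℝ) : ℝ :=
  (1 / 2) * l ^ 2 * v + l ^ 2 * K * (fSeries 2 (l * cstar) - 1 / 2) -
    l ^ 4 * cstar ^ 2 * K1 * fSeries 4 (l * cstar)

/-- **Theorem 3, tightest bound `B₁`.** With the setup of Lemma 1, for every `t > 0` and
every `λ > 0`, `ℙ(S_n ≥ n t) ≤ exp (n (B(λ) − λ t))`, i.e.
`(1/n) log ℙ(S_n ≥ n t) ≤ B(λ; c✶, v̄, K, K₁) − λ t`; consequently
`(1/n) log ℙ(S_n ≥ n t) ≤ inf_{λ > 0} {B(λ; c✶, v̄, K, K₁) − λ t}`. -/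
lemma fSummable (k : ℕ) (u : ℝ) : Summable (fun j : ℕ => u ^ j / (Nat.factorial (j + k) : ℝ)) := by
  apply Summable.of_norm_bounded (Real.summable_pow_div_factorial |u|)
  intro j
  rw [norm_div, norm_pow, Real.norm_eq_abs, Real.norm_eq_abs, Nat.abs_cast]
  apply div_le_div_of_nonneg_left (by positivity) (by positivity)
  exact_mod_cast Nat.factorial_le (Nat.le_add_right j k)

lemma real_exp_tsum (u : ℝ) : Real.exp u = ∑' n : ℕ, u ^ n / (Nat.factorial n : ℝ) := by
  rw [Real.exp_eq_exp_ℝ, NormedSpace.exp_eq_tsum_div]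

lemma fSeries_nonneg (k : ℕ) {u : ℝ} (hu : 0 ≤ u) : 0 ≤ fSeries k u :=
  tsum_nonneg (fun j => by positivity)

lemma fSeries_ge (k : ℕ) {u : ℝ} (hu : 0 ≤ u) :
    1 / (Nat.factorial k : ℝ) ≤ fSeries k u := by
  have := Summable.le_tsum (fSummable k u) 0 (fun j _ => by positivity)
  simpa [fSeries] using this

lemma fSeries_mono (k : ℕ) {y u : ℝ} (hy : 0 ≤ y) (hyu : y ≤ u) :
    fSeries k y ≤ fSeries k u := by
  apply Summable.tsum_le_tsum _ (fSummable k y) (fSummable k u)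
  intro j
  apply div_le_div_of_nonneg_right _ (by positivity)
  · exact pow_le_pow_left₀ hy hyu j

lemma exp_eq_f2 (u : ℝ) : Real.exp u = 1 + u + u ^ 2 * fSeries 2 u := by
  have h0 : Summable (fun n : ℕ => u ^ n / (Nat.factorial n : ℝ)) := by
    simpa using fSummable 0 u
  have h1 : Summable (fun n : ℕ => u ^ (n+1) / (Nat.factorial (n+1) : ℝ)) := by
    exact_mod_cast (summable_nat_add_iff 1).2 h0
  have key : ∀ j : ℕ, u ^ (j+1+1) / (Nat.factorial (j+1+1) : ℝ)
      = u ^ 2 * (u ^ j / (Nat.factorial (j+2) : ℝ)) := by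
    intro j
    rw [show j+1+1 = j+2 from rfl, pow_add, mul_comm (u^j)]
    ring
  rw [real_exp_tsum, Summable.tsum_eq_zero_add h0, Summable.tsum_eq_zero_add h1, tsum_congr key,
    tsum_mul_left, fSeries]
  simp [Nat.factorial]
  ring

lemma exp_quad_nonpos {y : ℝ} (hy : y ≤ 0) : Real.exp y ≤ 1 + y + y ^ 2 / 2 := by
  have hg : ∀ x : ℝ, HasDerivAt (fun z => 1 + z + z ^ 2 / 2 - Real.exp z)
      (1 + x - Real.exp x) x := by
    intro x
    have h1 : HasDerivAt (fun z : ℝ => 1 + z + z ^ 2 / 2) (1 + x) x := by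
      have := ((hasDerivAt_id x).const_add 1).add ((hasDerivAt_pow 2 x).div_const 2)
      refine this.congr_deriv ?_
      push_cast
      ring
    exact h1.sub (Real.hasDerivAt_exp x)
  have hanti : Antitone (fun z => 1 + z + z ^ 2 / 2 - Real.exp z) := by
    apply antitone_of_deriv_nonpos
    · exact fun x => (hg x).differentiableAt
    · intro x
      rw [(hg x).deriv]
      have := Real.add_one_le_exp x
      linarith
  have := hanti hy
  simp only [Real.exp_zero] at this
  nlinarith [this]

lemma exp_ptwise {y u : ℝ} (hu : 0 ≤ u) (hyu : y ≤ u) :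
    Real.exp y ≤ 1 + y + y ^ 2 * fSeries 2 u := by
  have hf2 : (1:ℝ) / 2 ≤ fSeries 2 u := by
    have := fSeries_ge 2 hu
    norm_num [Nat.factorial] at this
    linarith
  rcases le_or_gt y 0 with h | h
  · have := exp_quad_nonpos h
    nlinarith [sq_nonneg y]
  · rw [exp_eq_f2 y]
    have := fSeries_mono 2 h.le hyu
    nlinarith [sq_nonneg y]

lemma hsumT (x : ℝ) : Summable (fun j : ℕ => x ^ (j+2) / (Nat.factorial (j+4) : ℝ)) :=
  (summable_nat_add_iff 2).2 (fSummable 2 x)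

lemma expand_f2 (x : ℝ) :
    fSeries 2 x = 1/2 + x/6 + ∑' j : ℕ, x ^ (j+2) / (Nat.factorial (j+4) : ℝ) := by
  have h0 := fSummable 2 x
  have h1 : Summable (fun j : ℕ => x ^ (j+1) / (Nat.factorial (j+1+2) : ℝ)) :=
    (summable_nat_add_iff 1).2 h0
  have e0 : x ^ (0:ℕ) / ((Nat.factorial (0+2) : ℕ) : ℝ) = 1/2 := by
    norm_num [Nat.factorial]
  have e1 : x ^ (0+1:ℕ) / ((Nat.factorial (0+1+2) : ℕ) : ℝ) = x/6 := by
    norm_num [Nat.factorial]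
  rw [fSeries, Summable.tsum_eq_zero_add h0, Summable.tsum_eq_zero_add h1, e0, e1, ← add_assoc]

lemma u2f4 (u : ℝ) : u ^ 2 * fSeries 4 u = ∑' j : ℕ, u ^ (j+2) / (Nat.factorial (j+4) : ℝ) := by
  rw [fSeries, ← tsum_mul_left]
  apply tsum_congr
  intro j
  rw [pow_add, mul_comm (u ^ j)]
  ring

lemma f2_comparison {u r : ℝ} (hu : 0 ≤ u) (hr0 : 0 ≤ r) (hr1 : r ≤ 1) :
    fSeries 2 (u * r) ≤ 1 / 2 + r * (fSeries 2 u - 1 / 2) - u ^ 2 * r * (1 - r) * fSeries 4 u := by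
  have key : (∑' j : ℕ, (u*r) ^ (j+2) / (Nat.factorial (j+4) : ℝ))
      ≤ ∑' j : ℕ, r ^ 2 * (u ^ (j+2) / (Nat.factorial (j+4) : ℝ)) := by
    apply Summable.tsum_le_tsum _ (hsumT (u*r)) ((hsumT u).mul_left _)
    intro j
    rw [mul_pow, ← mul_div_assoc]
    apply div_le_div_of_nonneg_right _ (by positivity)
    have e : r ^ (j+2) = r ^ j * r ^ 2 := pow_add r j 2
    rw [e, mul_comm (r ^ j) (r ^ 2), ← mul_assoc, mul_comm (u ^ (j+2)) (r ^ 2), mul_assoc]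
    have : u ^ (j+2) * r ^ j ≤ u ^ (j+2) * 1 :=
      mul_le_mul_of_nonneg_left (pow_le_one₀ hr0 hr1) (pow_nonneg hu _)
    nlinarith [sq_nonneg r]
  rw [tsum_mul_left] at key
  have h1 := expand_f2 (u * r)
  have h2 := expand_f2 u
  have h3 := u2f4 u
  have hr2 : r ^ 2 = r - r * (1 - r) := by ring
  nlinarith [key, h1, h2, h3]

lemma exp_integrable {Ω : Type*} [MeasurableSpace Ω] (μ : Measure Ω) [IsProbabilityMeasure μ]
    {X : Ω → ℝ} {c l : ℝ} (hmeas : Measurable X) (hbdd : ∀ᵐ ω ∂μ, X ω ≤ c) (hl : 0 ≤ l) :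
    Integrable (fun ω => Real.exp (l * X ω)) μ := by
  apply Integrable.mono' (integrable_const (Real.exp (l * c)))
    ((hmeas.const_mul l).exp.aestronglyMeasurable)
  filter_upwards [hbdd] with ω h
  rw [Real.norm_eq_abs, abs_of_pos (Real.exp_pos _), Real.exp_le_exp]
  exact mul_le_mul_of_nonneg_left h hl

lemma mgf_bound {Ω : Type*} [MeasurableSpace Ω] (μ : Measure Ω) [IsProbabilityMeasure μ]
    {X : Ω → ℝ} {σ2 c l : ℝ} (hmeas : Measurable X) (hmean : ∫ ω, X ω ∂μ = 0)
    (hL2 : MemLp X 2 μ) (hvar : variance X μ = σ2) (hc : 0 ≤ c)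
    (hbdd : ∀ᵐ ω ∂μ, X ω ≤ c) (hl : 0 < l) :
    mgf X μ l ≤ Real.exp (l ^ 2 * σ2 * fSeries 2 (l * c)) := by
  have hint : Integrable (fun ω => Real.exp (l * X ω)) μ := exp_integrable μ hmeas hbdd hl.le
  have hX1 : Integrable X μ := hL2.integrable one_le_two
  have hX2 : Integrable (fun ω => X ω ^ 2) μ := by
    have := hL2.integrable_sq
    simpa [sq] using this
  have hrhs : Integrable (fun ω => 1 + l * X ω + (l ^ 2 * fSeries 2 (l * c)) * X ω ^ 2) μ :=
    ((integrable_const 1).add (hX1.const_mul l)).add (hX2.const_mul _)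
  have hmono : mgf X μ l ≤ ∫ ω, (1 + l * X ω + (l ^ 2 * fSeries 2 (l * c)) * X ω ^ 2) ∂μ := by
    rw [mgf]
    apply integral_mono_ae hint hrhs
    filter_upwards [hbdd] with ω h
    have := exp_ptwise (y := l * X ω) (u := l * c) (by positivity)
      (mul_le_mul_of_nonneg_left h hl.le)
    calc Real.exp (l * X ω) ≤ 1 + l * X ω + (l * X ω) ^ 2 * fSeries 2 (l * c) := this
    _ = 1 + l * X ω + (l ^ 2 * fSeries 2 (l * c)) * X ω ^ 2 := by ring
  have hX2val : ∫ ω, X ω ^ 2 ∂μ = σ2 := by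
    rw [← hvar, variance_eq_sub hL2, hmean]
    simp [sq]
  have hA : Integrable (fun ω => 1 + l * X ω) μ := (integrable_const 1).add (hX1.const_mul l)
  have hB : Integrable (fun ω => (l ^ 2 * fSeries 2 (l * c)) * X ω ^ 2) μ := hX2.const_mul _
  have hC : Integrable (fun ω => l * X ω) μ := hX1.const_mul l
  rw [integral_add hA hB, integral_add (integrable_const 1) hC,
    integral_const, integral_const_mul, integral_const_mul, hmean, hX2val] at hmono
  simp only [probReal_univ, measure_univ, ENNReal.toReal_one, smul_eq_mul, mul_one, mul_zero, add_zero] at hmono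
  calc mgf X μ l ≤ 1 + l ^ 2 * fSeries 2 (l * c) * σ2 := hmono
  _ ≤ Real.exp (l ^ 2 * fSeries 2 (l * c) * σ2) := by
      have := Real.add_one_le_exp (l ^ 2 * fSeries 2 (l * c) * σ2)
      linarith
  _ = Real.exp (l ^ 2 * σ2 * fSeries 2 (l * c)) := by ring_nf


theorem theorem_three_tightest_bound
    {Ω : Type*} [MeasurableSpace Ω] (μ : Measure Ω) [IsProbabilityMeasure μ]
    (n : ℕ) (hn : 0 < n) (X : Fin n → Ω → ℝ) (σ c : Fin n → ℝ) (cstar : ℝ)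
    (hmeas : ∀ i, Measurable (X i))
    (hindep : iIndepFun X μ)
    (hmean : ∀ i, ∫ ω, X i ω ∂μ = 0)
    (hL2 : ∀ i, MemLp (X i) 2 μ)
    (hvar : ∀ i, variance (X i) μ = σ i ^ 2)
    (hcnonneg : ∀ i, 0 ≤ c i)
    (hbdd : ∀ i, ∀ᵐ ω ∂μ, X i ω ≤ c i)
    (hcmax : ∀ i, c i ≤ cstar) (hcattained : ∃ i, c i = cstar) (hcpos : 0 < cstar)
    (v K K1 : ℝ)
    (hv : v = (1 / (n : ℝ)) * ∑ i, σ i ^ 2)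
    (hK : K = (1 / (n : ℝ)) * ∑ i, σ i ^ 2 * (c i / cstar))
    (hK1 : K1 = (1 / (n : ℝ)) * ∑ i, σ i ^ 2 * (c i / cstar) * (1 - c i / cstar))
    (t : ℝ) (ht : 0 < t) :
    (∀ l : ℝ, 0 < l →
      (μ {ω | (n : ℝ) * t ≤ ∑ i, X i ω}).toReal ≤
        Real.exp ((n : ℝ) * (Bbound l cstar v K K1 - l * t))) ∧
    (μ {ω | (n : ℝ) * t ≤ ∑ i, X i ω}).toReal ≤
      Real.exp ((n : ℝ) * sInf {y : ℝ | ∃ l : ℝ, 0 < l ∧ y = Bbound l cstar v K K1 - l * t}) := by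
  have hn' : (n : ℝ) ≠ 0 := Nat.cast_ne_zero.2 hn.ne'
  have hcs : cstar ≠ 0 := hcpos.ne'
  have main : ∀ l : ℝ, 0 < l →
      (μ {ω | (n : ℝ) * t ≤ ∑ i, X i ω}).toReal ≤
        Real.exp ((n : ℝ) * (Bbound l cstar v K K1 - l * t)) := by
    intro l hl
    -- integrability of exp(l * S)
    have hSmeas : Measurable (fun ω => ∑ i, X i ω) :=
      Finset.measurable_sum univ (fun i _ => hmeas i)
    have hSbdd : ∀ᵐ ω ∂μ, (∑ i, X i ω) ≤ ∑ i, c i := by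
      filter_upwards [ae_all_iff.2 hbdd] with ω h
      exact Finset.sum_le_sum (fun i _ => h i)
    have hintS : Integrable (fun ω => Real.exp (l * (∑ i, X i) ω)) μ := by
      simpa only [Finset.sum_apply] using exp_integrable μ hSmeas hSbdd hl.le
    have chern := measure_ge_le_exp_mul_mgf (X := ∑ i, X i) (μ := μ) (t := l)
      ((n : ℝ) * t) hl.le hintS
    simp only [Finset.sum_apply] at chern
    have hmgfsum : mgf (∑ i, X i) μ l = ∏ i, mgf (X i) μ l :=
      hindep.mgf_sum hmeas univ
    have hprod : (∏ i, mgf (X i) μ l) ≤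
        ∏ i, Real.exp (l ^ 2 * σ i ^ 2 * fSeries 2 (l * c i)) := by
      apply Finset.prod_le_prod (fun i _ => mgf_nonneg)
      intro i _
      exact mgf_bound μ (hmeas i) (hmean i) (hL2 i) (hvar i) (hcnonneg i) (hbdd i) hl
    have hsum : (∑ i, l ^ 2 * σ i ^ 2 * fSeries 2 (l * c i)) ≤
        (n : ℝ) * Bbound l cstar v K K1 := by
      have hterm : ∀ i : Fin n, l ^ 2 * σ i ^ 2 * fSeries 2 (l * c i) ≤
          (l ^ 2 / 2) * (σ i ^ 2) +
          (l ^ 2 * (fSeries 2 (l * cstar) - 1 / 2)) * (σ i ^ 2 * (c i / cstar)) -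
          (l ^ 4 * cstar ^ 2 * fSeries 4 (l * cstar)) *
            (σ i ^ 2 * (c i / cstar) * (1 - c i / cstar)) := by
        intro i
        have hσ : 0 ≤ σ i ^ 2 := by rw [← hvar i]; exact variance_nonneg _ _
        have hr0 : 0 ≤ c i / cstar := div_nonneg (hcnonneg i) hcpos.le
        have hr1 : c i / cstar ≤ 1 := (div_le_one hcpos).2 (hcmax i)
        have hcomp := f2_comparison (u := l * cstar) (r := c i / cstar)
          (by positivity) hr0 hr1
        have harg : (l * cstar) * (c i / cstar) = l * c i := by
          field_simp
        rw [harg] at hcomp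
        have := mul_le_mul_of_nonneg_left hcomp (by positivity : (0:ℝ) ≤ l ^ 2 * σ i ^ 2)
        nlinarith [this]
      calc (∑ i, l ^ 2 * σ i ^ 2 * fSeries 2 (l * c i)) ≤
          ∑ i, ((l ^ 2 / 2) * (σ i ^ 2) +
          (l ^ 2 * (fSeries 2 (l * cstar) - 1 / 2)) * (σ i ^ 2 * (c i / cstar)) -
          (l ^ 4 * cstar ^ 2 * fSeries 4 (l * cstar)) *
            (σ i ^ 2 * (c i / cstar) * (1 - c i / cstar))) :=
          Finset.sum_le_sum (fun i _ => hterm i)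
      _ = (n : ℝ) * Bbound l cstar v K K1 := by
          rw [Finset.sum_sub_distrib, Finset.sum_add_distrib, ← Finset.mul_sum,
            ← Finset.mul_sum, ← Finset.mul_sum, Bbound, hv, hK, hK1]
          field_simp
    calc (μ {ω | (n : ℝ) * t ≤ ∑ i, X i ω}).toReal ≤
        Real.exp (-l * ((n : ℝ) * t)) * mgf (∑ i, X i) μ l := chern
    _ ≤ Real.exp (-l * ((n : ℝ) * t)) *
        Real.exp (∑ i, l ^ 2 * σ i ^ 2 * fSeries 2 (l * c i)) := by
        apply mul_le_mul_of_nonneg_left _ (Real.exp_pos _).le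
        rw [hmgfsum, Real.exp_sum]
        exact hprod
    _ = Real.exp ((∑ i, l ^ 2 * σ i ^ 2 * fSeries 2 (l * c i)) - l * ((n : ℝ) * t)) := by
        rw [← Real.exp_add]; ring_nf
    _ ≤ Real.exp ((n : ℝ) * (Bbound l cstar v K K1 - l * t)) := by
        rw [Real.exp_le_exp]
        have : (n : ℝ) * (Bbound l cstar v K K1 - l * t)
            = (n : ℝ) * Bbound l cstar v K K1 - l * ((n : ℝ) * t) := by ring
        rw [this]
        linarith [hsum]
  refine ⟨main, ?_⟩
  set P := (μ {ω | (n : ℝ) * t ≤ ∑ i, X i ω}).toReal with hP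
  rcases eq_or_lt_of_le (ENNReal.toReal_nonneg : 0 ≤ P) with h0 | hpos
  · rw [hP, ← h0]
    exact (Real.exp_pos _).le
  · have hne : {y : ℝ | ∃ l : ℝ, 0 < l ∧ y = Bbound l cstar v K K1 - l * t}.Nonempty :=
      ⟨Bbound 1 cstar v K K1 - 1 * t, 1, one_pos, rfl⟩
    have hlb : ∀ y ∈ {y : ℝ | ∃ l : ℝ, 0 < l ∧ y = Bbound l cstar v K K1 - l * t},
        Real.log P / (n : ℝ) ≤ y := by
      rintro y ⟨l, hl, rfl⟩
      have := main l hl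
      have hlog := Real.log_le_log hpos this
      rw [Real.log_exp] at hlog
      rw [div_le_iff₀ (by positivity : (0:ℝ) < (n:ℝ))]
      linarith [hlog]
    have hsinf : Real.log P / (n : ℝ) ≤
        sInf {y : ℝ | ∃ l : ℝ, 0 < l ∧ y = Bbound l cstar v K K1 - l * t} :=
      le_csInf hne hlb
    have : Real.log P ≤ (n : ℝ) *
        sInf {y : ℝ | ∃ l : ℝ, 0 < l ∧ y = Bbound l cstar v K K1 - l * t} := by
      rw [div_le_iff₀ (by positivity : (0:ℝ) < (n:ℝ))] at hsinf
      linarith [hsinf]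
    calc P = Real.exp (Real.log P) := (Real.exp_log hpos).symm
    _ ≤ _ := by rw [Real.exp_le_exp]; exact this
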